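/- Let N, K ≥ 1, δ = 1/(2·1600²K⁴N²), μ = 1/(1600²K⁴N²). Let Ψ⁽¹⁾, Ψ⁽²⁾ be graph coloring states in ℂ^N⊗ℂ^K with amplitudes α_v⁽ᵗ⁾, β⁽ᵗ⁾_{v,j}. Assume: (i) (1 − |⟨Ψ⁽¹⁾,Ψ⁽²⁾⟩|²)/2 ≤ δ; (ii) the color-consistency test rejects with probability at most μ, i.e., Σ_v Σ_j Σ_{j'≠j} |α_v⁽¹⁾β⁽¹⁾_{v,j}|²·|α_v⁽²⁾β⁽²⁾_{v,j'}|² ≤ μ. Then for every vertex v with |α_v⁽¹⁾|² ≥ 1/(8N), there exists a unique color j with |β⁽¹⁾_{v,j}|² ≥ (100K−1)/(100K). -/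

import Mathlib

private lemma bt_cs_aux {ι : Type*} (s : Finset ι) (x y : ι → ℂ) :
    ‖∑ k ∈ s, (starRingEnd ℂ) (x k) * y k‖ ≤
      Real.sqrt (∑ k ∈ s, ‖x k‖ ^ 2) * Real.sqrt (∑ k ∈ s, ‖y k‖ ^ 2) := by
  calc ‖∑ k ∈ s, (starRingEnd ℂ) (x k) * y k‖ ≤ ∑ k ∈ s, ‖x k‖ * ‖y k‖ := by
        refine (norm_sum_le _ _).trans_eq ?_
        simp [norm_mul]
    _ ≤ Real.sqrt (∑ k ∈ s, ‖x k‖ ^ 2) * Real.sqrt (∑ k ∈ s, ‖y k‖ ^ 2) := by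
        have h := Finset.sum_mul_sq_le_sq_mul_sq s (fun k => ‖x k‖) (fun k => ‖y k‖)
        have h1 : (0:ℝ) ≤ ∑ k ∈ s, ‖x k‖ * ‖y k‖ :=
          Finset.sum_nonneg fun k _ => mul_nonneg (norm_nonneg _) (norm_nonneg _)
        have h2 : (0:ℝ) ≤ ∑ k ∈ s, ‖x k‖ ^ 2 := Finset.sum_nonneg fun k _ => sq_nonneg _
        rw [← Real.sqrt_mul h2]
        exact (Real.le_sqrt h1 (by positivity)).mpr h

private lemma bt_key_aux {ι : Type*} [Fintype ι] [DecidableEq ι] (x y : ι → ℂ)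
    (hx : ∑ k, ‖x k‖ ^ 2 = 1) (hy : ∑ k, ‖y k‖ ^ 2 = 1) (i : ι) :
    ‖∑ k, (starRingEnd ℂ) (x k) * y k‖ ^ 2 ≤ 1 - (‖x i‖ ^ 2 - ‖y i‖ ^ 2) ^ 2 := by
  set c := ‖∑ k, (starRingEnd ℂ) (x k) * y k‖ with hc
  have hxrest : ∑ k ∈ Finset.univ.erase i, ‖x k‖ ^ 2 = 1 - ‖x i‖ ^ 2 := by
    rw [← hx]; rw [← Finset.add_sum_erase _ _ (Finset.mem_univ i)]; ring
  have hyrest : ∑ k ∈ Finset.univ.erase i, ‖y k‖ ^ 2 = 1 - ‖y i‖ ^ 2 := by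
    rw [← hy]; rw [← Finset.add_sum_erase _ _ (Finset.mem_univ i)]; ring
  have hsplit : ∑ k, (starRingEnd ℂ) (x k) * y k =
      (starRingEnd ℂ) (x i) * y i + ∑ k ∈ Finset.univ.erase i, (starRingEnd ℂ) (x k) * y k :=
    (Finset.add_sum_erase _ _ (Finset.mem_univ i)).symm
  set p := ‖x i‖; set q := ‖y i‖
  set r := Real.sqrt (1 - p ^ 2) with hr
  set s := Real.sqrt (1 - q ^ 2) with hs
  have hp1 : p ^ 2 ≤ 1 := by
    rw [← hx]
    exact Finset.single_le_sum (f := fun k => ‖x k‖ ^ 2) (fun k _ => sq_nonneg _)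
      (Finset.mem_univ i)
  have hq1 : q ^ 2 ≤ 1 := by
    rw [← hy]
    exact Finset.single_le_sum (f := fun k => ‖y k‖ ^ 2) (fun k _ => sq_nonneg _)
      (Finset.mem_univ i)
  have hr2 : r ^ 2 = 1 - p ^ 2 := Real.sq_sqrt (by linarith)
  have hs2 : s ^ 2 = 1 - q ^ 2 := Real.sq_sqrt (by linarith)
  have hcle : c ≤ p * q + r * s := by
    rw [hc, hsplit]
    refine (norm_add_le _ _).trans ?_
    have h1 : ‖(starRingEnd ℂ) (x i) * y i‖ = p * q := by rw [norm_mul, RCLike.norm_conj]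
    have h2 := bt_cs_aux (Finset.univ.erase i) x y
    rw [hxrest, hyrest] at h2
    rw [h1]; exact add_le_add le_rfl h2
  have hc0 : 0 ≤ c := norm_nonneg _
  have hp0 : 0 ≤ p := norm_nonneg _
  have hq0 : 0 ≤ q := norm_nonneg _
  have hr0 : 0 ≤ r := Real.sqrt_nonneg _
  have hs0 : 0 ≤ s := Real.sqrt_nonneg _
  nlinarith [sq_nonneg (p * r - q * s), mul_nonneg (mul_nonneg hp0 hq0) (mul_nonneg hr0 hs0),
    sq_nonneg (p * q + r * s), mul_le_mul hcle hcle hc0 (by positivity)]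

set_option maxHeartbeats 1000000 in
open Finset in
/-- Blier–Tapp Lemma 3.4: if the swap test rejects the pair `(Ψ¹, Ψ²)` with probability at most
`δ = 1/(2·1600²K⁴N²)` and the color-consistency test rejects with probability at most
`μ = 1/(1600²K⁴N²)`, then every heavy vertex (`|α¹_v|² ≥ 1/(8N)`) has a unique color `j`
with `|β¹_{v,j}|² ≥ (100K−1)/(100K)`. -/
theorem stmt_14 {N K : ℕ} (hN : 0 < N) (hK : 0 < K)
    (α₁ α₂ : Fin N → ℂ) (β₁ β₂ : Fin N → Fin K → ℂ)
    (hα₁ : ∑ v, ‖α₁ v‖ ^ 2 = 1) (hα₂ : ∑ v, ‖α₂ v‖ ^ 2 = 1)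
    (hβ₁ : ∀ v, ∑ j, ‖β₁ v j‖ ^ 2 = 1) (hβ₂ : ∀ v, ∑ j, ‖β₂ v j‖ ^ 2 = 1)
    (hswap : (1 - ‖∑ v, ∑ j, (starRingEnd ℂ) (α₁ v * β₁ v j) * (α₂ v * β₂ v j)‖ ^ 2) / 2 ≤
      1 / (2 * 1600 ^ 2 * K ^ 4 * N ^ 2))
    (hcons : ∑ v, ∑ j, ∑ j' ∈ Finset.univ.filter (fun j' : Fin K => j' ≠ j),
        ‖α₁ v * β₁ v j‖ ^ 2 * ‖α₂ v * β₂ v j'‖ ^ 2 ≤ 1 / (1600 ^ 2 * K ^ 4 * N ^ 2)) :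
    ∀ v : Fin N, 1 / (8 * N) ≤ ‖α₁ v‖ ^ 2 →
      ∃! j : Fin K, (100 * K - 1) / (100 * K) ≤ ‖β₁ v j‖ ^ 2 := by
  intro v hv
  have hn1 : (1:ℝ) ≤ (N:ℝ) := by exact_mod_cast hN
  have hk1 : (1:ℝ) ≤ (K:ℝ) := by exact_mod_cast hK
  have hn0 : (0:ℝ) < (N:ℝ) := by linarith
  have hk0 : (0:ℝ) < (K:ℝ) := by linarith
  -- existence of a heavy color
  have hex : ∃ j : Fin K, (100 * (K:ℝ) - 1) / (100 * K) ≤ ‖β₁ v j‖ ^ 2 := by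
    by_contra hno
    push_neg at hno
    -- unit vectors on the product space
    have hxnorm : ∑ p : Fin N × Fin K, ‖α₁ p.1 * β₁ p.1 p.2‖ ^ 2 = 1 := by
      rw [Fintype.sum_prod_type]
      calc ∑ w, ∑ j, ‖α₁ w * β₁ w j‖ ^ 2 = ∑ w, ‖α₁ w‖ ^ 2 * ∑ j, ‖β₁ w j‖ ^ 2 := by
            simp [norm_mul, mul_pow, Finset.mul_sum]
        _ = 1 := by simp only [hβ₁, mul_one]; exact hα₁
    have hynorm : ∑ p : Fin N × Fin K, ‖α₂ p.1 * β₂ p.1 p.2‖ ^ 2 = 1 := by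
      rw [Fintype.sum_prod_type]
      calc ∑ w, ∑ j, ‖α₂ w * β₂ w j‖ ^ 2 = ∑ w, ‖α₂ w‖ ^ 2 * ∑ j, ‖β₂ w j‖ ^ 2 := by
            simp [norm_mul, mul_pow, Finset.mul_sum]
        _ = 1 := by simp only [hβ₂, mul_one]; exact hα₂
    -- the heaviest color j₁
    obtain ⟨j₁, -, hj₁max⟩ := Finset.exists_max_image Finset.univ (fun j => ‖β₁ v j‖ ^ 2)
      (Finset.univ_nonempty_iff.mpr ⟨⟨0, hK⟩⟩)
    set b₁ := ‖β₁ v j₁‖ ^ 2 with hb₁def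
    have hb₁K : 1 ≤ (K:ℝ) * b₁ := by
      have h := Finset.sum_le_card_nsmul Finset.univ (fun j => ‖β₁ v j‖ ^ 2) b₁
        (fun j _ => hj₁max j (Finset.mem_univ j))
      rw [hβ₁ v] at h
      simpa [nsmul_eq_mul] using h
    have hb₁lt : b₁ < (100 * (K:ℝ) - 1) / (100 * K) := hno j₁
    have hb₁one : b₁ ≤ 1 := by
      rw [← hβ₁ v]
      exact Finset.single_le_sum (f := fun j => ‖β₁ v j‖ ^ 2) (fun j _ => sq_nonneg _)
        (Finset.mem_univ j₁)
    have hrest : ∑ j ∈ Finset.univ.erase j₁, ‖β₁ v j‖ ^ 2 = 1 - b₁ := by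
      rw [Finset.sum_erase_eq_sub (Finset.mem_univ j₁), hβ₁ v]
    have hrestpos : 1 / (100 * (K:ℝ)) < 1 - b₁ := by
      have : 1 - (100 * (K:ℝ) - 1) / (100 * K) = 1 / (100 * K) := by
        field_simp; ring
      linarith [hb₁lt]
    have hne : (Finset.univ.erase j₁).Nonempty := by
      by_contra h
      rw [Finset.not_nonempty_iff_eq_empty] at h
      rw [h, Finset.sum_empty] at hrest
      have : (0:ℝ) < 1 / (100 * (K:ℝ)) := by positivity
      linarith
    -- second heaviest color j₂
    obtain ⟨j₂, hj₂mem, hj₂max⟩ := Finset.exists_max_image (Finset.univ.erase j₁)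
      (fun j => ‖β₁ v j‖ ^ 2) hne
    have hj₂ne : j₂ ≠ j₁ := Finset.ne_of_mem_erase hj₂mem
    set b₂ := ‖β₁ v j₂‖ ^ 2 with hb₂def
    have hb₂0 : 0 ≤ b₂ := sq_nonneg _
    have hb₂K : 1 - b₁ ≤ (K:ℝ) * b₂ := by
      have h := Finset.sum_le_card_nsmul (Finset.univ.erase j₁) (fun j => ‖β₁ v j‖ ^ 2) b₂
        (fun j hj => hj₂max j hj)
      rw [hrest] at h
      have hcard : ((Finset.univ.erase j₁).card : ℝ) ≤ (K:ℝ) := by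
        have := Finset.card_le_card (Finset.subset_univ (Finset.univ.erase j₁))
        simp only [Finset.card_univ, Fintype.card_fin] at this
        exact_mod_cast this
      calc 1 - b₁ ≤ ((Finset.univ.erase j₁).card : ℝ) * b₂ := by
            simpa [nsmul_eq_mul] using h
        _ ≤ (K:ℝ) * b₂ := mul_le_mul_of_nonneg_right hcard hb₂0
    have hb₂ : 1 / (100 * (K:ℝ) ^ 2) ≤ b₂ := by
      have h1 : 1 / (100 * (K:ℝ)) ≤ (K:ℝ) * b₂ := le_of_lt (lt_of_lt_of_le hrestpos hb₂K)
      rw [div_le_iff₀ (by positivity)] at h1 ⊢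
      nlinarith
    -- swap test transfer at coordinate (v, j₂)
    have hkey := bt_key_aux (fun p : Fin N × Fin K => α₁ p.1 * β₁ p.1 p.2)
      (fun p : Fin N × Fin K => α₂ p.1 * β₂ p.1 p.2) hxnorm hynorm (v, j₂)
    simp only [Fintype.sum_prod_type] at hkey
    set u := ‖α₁ v * β₁ v j₂‖ ^ 2 with hudef
    set w := ‖α₂ v * β₂ v j₂‖ ^ 2 with hwdef
    have hsq : (u - w) ^ 2 ≤ (1 / (1600 * (K:ℝ) ^ 2 * N)) ^ 2 := by
      have hE : (1 / (1600 * (K:ℝ) ^ 2 * N)) ^ 2 = 1 / (1600 ^ 2 * (K:ℝ) ^ 4 * N ^ 2) := by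
        field_simp
      rw [hE]
      have h2 : 1 - ‖∑ w, ∑ j, (starRingEnd ℂ) (α₁ w * β₁ w j) * (α₂ w * β₂ w j)‖ ^ 2 ≤
          1 / (1600 ^ 2 * (K:ℝ) ^ 4 * N ^ 2) := by
        have := hswap
        rw [div_le_iff₀ (by norm_num : (0:ℝ) < 2)] at this
        calc 1 - ‖∑ w, ∑ j, (starRingEnd ℂ) (α₁ w * β₁ w j) * (α₂ w * β₂ w j)‖ ^ 2
            ≤ 1 / (2 * 1600 ^ 2 * (K:ℝ) ^ 4 * N ^ 2) * 2 := this
          _ = 1 / (1600 ^ 2 * (K:ℝ) ^ 4 * N ^ 2) := by field_simp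
      linarith [hkey]
    have hE0 : (0:ℝ) < 1 / (1600 * (K:ℝ) ^ 2 * N) := by positivity
    have huw : u - w ≤ 1 / (1600 * (K:ℝ) ^ 2 * N) := by
      calc u - w ≤ |u - w| := le_abs_self _
        _ = Real.sqrt ((u - w) ^ 2) := (Real.sqrt_sq_eq_abs _).symm
        _ ≤ Real.sqrt ((1 / (1600 * (K:ℝ) ^ 2 * N)) ^ 2) := Real.sqrt_le_sqrt hsq
        _ = 1 / (1600 * (K:ℝ) ^ 2 * N) := Real.sqrt_sq hE0.le
    -- lower bound on u
    have hu : 1 / (800 * (N:ℝ) * K ^ 2) ≤ u := by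
      have : u = ‖α₁ v‖ ^ 2 * b₂ := by rw [hudef, norm_mul, mul_pow]
      rw [this]
      calc 1 / (800 * (N:ℝ) * K ^ 2) = (1 / (8 * N)) * (1 / (100 * (K:ℝ) ^ 2)) := by
            field_simp; ring
        _ ≤ ‖α₁ v‖ ^ 2 * b₂ := mul_le_mul hv hb₂ (by positivity) (sq_nonneg _)
    have hw : 1 / (1600 * (N:ℝ) * K ^ 2) ≤ w := by
      have heq : 1 / (800 * (N:ℝ) * K ^ 2) - 1 / (1600 * (K:ℝ) ^ 2 * N) =
          1 / (1600 * (N:ℝ) * K ^ 2) := by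
        field_simp; ring
      linarith
    -- lower bound on the consistency term
    have hterm : ‖α₁ v * β₁ v j₁‖ ^ 2 * w ≤ 1 / (1600 ^ 2 * (K:ℝ) ^ 4 * N ^ 2) := by
      refine le_trans ?_ hcons
      have hnn : ∀ (w' : Fin N) (j : Fin K) (j' : Fin K),
          (0:ℝ) ≤ ‖α₁ w' * β₁ w' j‖ ^ 2 * ‖α₂ w' * β₂ w' j'‖ ^ 2 :=
        fun _ _ _ => mul_nonneg (sq_nonneg _) (sq_nonneg _)
      have step1 : ‖α₁ v * β₁ v j₁‖ ^ 2 * w ≤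
          ∑ j' ∈ Finset.univ.filter (fun j' : Fin K => j' ≠ j₁),
            ‖α₁ v * β₁ v j₁‖ ^ 2 * ‖α₂ v * β₂ v j'‖ ^ 2 := by
        refine Finset.single_le_sum (fun j' _ => hnn v j₁ j') ?_
        simp [hj₂ne]
      have step2 : ∑ j' ∈ Finset.univ.filter (fun j' : Fin K => j' ≠ j₁),
            ‖α₁ v * β₁ v j₁‖ ^ 2 * ‖α₂ v * β₂ v j'‖ ^ 2 ≤
          ∑ j, ∑ j' ∈ Finset.univ.filter (fun j' : Fin K => j' ≠ j),
            ‖α₁ v * β₁ v j‖ ^ 2 * ‖α₂ v * β₂ v j'‖ ^ 2 := by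
        refine Finset.single_le_sum (f := fun j => ∑ j' ∈ Finset.univ.filter
          (fun j' : Fin K => j' ≠ j), ‖α₁ v * β₁ v j‖ ^ 2 * ‖α₂ v * β₂ v j'‖ ^ 2)
          (fun j _ => Finset.sum_nonneg fun j' _ => hnn v j j') (Finset.mem_univ j₁)
      have step3 : ∑ j, ∑ j' ∈ Finset.univ.filter (fun j' : Fin K => j' ≠ j),
            ‖α₁ v * β₁ v j‖ ^ 2 * ‖α₂ v * β₂ v j'‖ ^ 2 ≤
          ∑ w', ∑ j, ∑ j' ∈ Finset.univ.filter (fun j' : Fin K => j' ≠ j),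
            ‖α₁ w' * β₁ w' j‖ ^ 2 * ‖α₂ w' * β₂ w' j'‖ ^ 2 := by
        refine Finset.single_le_sum (f := fun w' => ∑ j, ∑ j' ∈ Finset.univ.filter
          (fun j' : Fin K => j' ≠ j), ‖α₁ w' * β₁ w' j‖ ^ 2 * ‖α₂ w' * β₂ w' j'‖ ^ 2)
          (fun w' _ => Finset.sum_nonneg fun j _ => Finset.sum_nonneg fun j' _ => hnn w' j j')
          (Finset.mem_univ v)
      linarith
    -- final numeric contradiction
    have hab₁ : ‖α₁ v * β₁ v j₁‖ ^ 2 = ‖α₁ v‖ ^ 2 * b₁ := by rw [norm_mul, mul_pow]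
    have hterm_lb : 1 / (12800 * (N:ℝ) ^ 2 * K ^ 3) ≤ ‖α₁ v * β₁ v j₁‖ ^ 2 * w := by
      rw [hab₁]
      have hb₁' : 1 / (K:ℝ) ≤ b₁ := by
        rw [div_le_iff₀ hk0]; linarith
      calc 1 / (12800 * (N:ℝ) ^ 2 * K ^ 3)
          = ((1 / (8 * N)) * (1 / (K:ℝ))) * (1 / (1600 * (N:ℝ) * K ^ 2)) := by
            field_simp; ring
        _ ≤ (‖α₁ v‖ ^ 2 * b₁) * w := by
            refine mul_le_mul (mul_le_mul hv hb₁' (by positivity) (sq_nonneg _)) hw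
              (by positivity) (by positivity)
    have hfinal : 1 / (1600 ^ 2 * (K:ℝ) ^ 4 * N ^ 2) < 1 / (12800 * (N:ℝ) ^ 2 * K ^ 3) := by
      rw [div_lt_div_iff₀ (by positivity) (by positivity)]
      have h1 : (0:ℝ) < (N:ℝ) ^ 2 * K ^ 3 := by positivity
      have h3 := mul_pos h1 (show (0:ℝ) < 2560000 * (K:ℝ) - 12800 by linarith)
      nlinarith [h3]
    linarith
  obtain ⟨j₀, hj₀⟩ := hex
  refine ⟨j₀, hj₀, ?_⟩
  intro j hj
  by_contra hne
  have ht : (99:ℝ) / 100 ≤ (100 * (K:ℝ) - 1) / (100 * K) := by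
    rw [div_le_div_iff₀ (by norm_num) (by positivity)]
    nlinarith
  have hsum : ‖β₁ v j‖ ^ 2 + ‖β₁ v j₀‖ ^ 2 ≤ 1 := by
    rw [← hβ₁ v]
    have hsub : ({j, j₀} : Finset (Fin K)) ⊆ Finset.univ := Finset.subset_univ _
    calc ‖β₁ v j‖ ^ 2 + ‖β₁ v j₀‖ ^ 2 = ∑ j' ∈ ({j, j₀} : Finset (Fin K)), ‖β₁ v j'‖ ^ 2 :=
          (Finset.sum_pair (f := fun j' => ‖β₁ v j'‖ ^ 2) hne).symm
      _ ≤ ∑ j', ‖β₁ v j'‖ ^ 2 :=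
          Finset.sum_le_sum_of_subset_of_nonneg hsub (fun j' _ _ => sq_nonneg _)
  linarith
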